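/- Let T > 0 and let f, y₁, y₂ : [0,T] → ℝ be continuous with y₁(0) = y₂(0), f(0) + y₁(0) ≥ 0, and suppose y₁(t) − y₁(s) > y₂(t) − y₂(s) for all 0 ≤ s < t ≤ T. Then for all 0 ≤ s < t ≤ T one has m_{f+y₂}(t) − m_{f+y₂}(s) ≥ m_{f+y₁}(t) − m_{f+y₁}(s). -/

import Mathlib

open Set

/-- The Skorohod reflection term: `m_f(t) = sup_{0 ≤ s ≤ t} max(-f(s), 0)`. -/
noncomputable def mf (f : ℝ → ℝ) (t : ℝ) : ℝ :=
  sSup ((fun s => max (-f s) 0) '' Set.Icc 0 t)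

/-- Comparison of the increments of the reflection terms: if the increments of `y₁`
strictly dominate those of `y₂`, then the increments of `m_{f+y₂}` dominate those of
`m_{f+y₁}` on `[0,T]`. -/
theorem stmt_5 (T : ℝ) (hT : 0 < T) (f y₁ y₂ : ℝ → ℝ)
    (hf : ContinuousOn f (Set.Icc 0 T))
    (hy₁ : ContinuousOn y₁ (Set.Icc 0 T)) (hy₂ : ContinuousOn y₂ (Set.Icc 0 T))
    (h0 : y₁ 0 = y₂ 0) (hinit : 0 ≤ f 0 + y₁ 0)
    (hincr : ∀ s t : ℝ, 0 ≤ s → s < t → t ≤ T → y₂ t - y₂ s < y₁ t - y₁ s) :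
    ∀ s t : ℝ, 0 ≤ s → s < t → t ≤ T →
      mf (fun u => f u + y₁ u) t - mf (fun u => f u + y₁ u) s ≤
      mf (fun u => f u + y₂ u) t - mf (fun u => f u + y₂ u) s := by
  intro s t hs hst htT
  have hsT : s ≤ T := hst.le.trans htT
  have ht0 : (0:ℝ) ≤ t := hs.trans hst.le
  set g₁ : ℝ → ℝ := fun u => f u + y₁ u with hg₁def
  set g₂ : ℝ → ℝ := fun u => f u + y₂ u with hg₂def
  have hc₁ : ContinuousOn (fun u => max (-g₁ u) 0) (Set.Icc 0 T) :=
    ((hf.add hy₁).neg).sup continuousOn_const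
  have hc₂ : ContinuousOn (fun u => max (-g₂ u) 0) (Set.Icc 0 T) :=
    ((hf.add hy₂).neg).sup continuousOn_const
  have hbdd : ∀ (h : ℝ → ℝ), ContinuousOn (fun u => max (-h u) 0) (Set.Icc 0 T) →
      ∀ a : ℝ, a ≤ T → BddAbove ((fun u => max (-h u) 0) '' Set.Icc 0 a) := by
    intro h hc a haT
    exact (isCompact_Icc.image_of_continuousOn
      (hc.mono (Set.Icc_subset_Icc_right haT))).bddAbove
  have hne : ∀ a : ℝ, 0 ≤ a → ((fun u => max (-g₂ u) 0) '' Set.Icc 0 a).Nonempty :=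
    fun a ha => ⟨_, Set.mem_image_of_mem _ (Set.mem_Icc.2 ⟨le_rfl, ha⟩)⟩
  have hne₁ : ∀ a : ℝ, 0 ≤ a → ((fun u => max (-g₁ u) 0) '' Set.Icc 0 a).Nonempty :=
    fun a ha => ⟨_, Set.mem_image_of_mem _ (Set.mem_Icc.2 ⟨le_rfl, ha⟩)⟩
  -- monotonicity of mf g₂
  have hmono₂ : mf g₂ s ≤ mf g₂ t := by
    refine csSup_le_csSup (hbdd g₂ hc₂ t htT) (hne s hs)
      (Set.image_mono (Set.Icc_subset_Icc_right hst.le))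
  rcases le_or_gt (mf g₁ t) (mf g₁ s) with hle | hlt
  · have : mf g₂ t - mf g₂ s ≥ 0 := by linarith
    linarith
  · -- mf g₁ s < mf g₁ t : the sup on [0,t] is attained at some r ∈ (s,t]
    obtain ⟨r, hrmem, hrmax⟩ := isCompact_Icc.exists_isMaxOn
      (Set.nonempty_Icc.2 ht0) (hc₁.mono (Set.Icc_subset_Icc_right htT))
    have heq : mf g₁ t = max (-g₁ r) 0 := by
      refine le_antisymm (csSup_le (hne₁ t ht0) ?_)
        (le_csSup (hbdd g₁ hc₁ t htT) (Set.mem_image_of_mem _ hrmem))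
      rintro x ⟨u, hu, rfl⟩
      exact hrmax hu
    have hrs : s < r := by
      by_contra hrs
      push_neg at hrs
      have : mf g₁ t ≤ mf g₁ s := heq.le.trans
        (le_csSup (hbdd g₁ hc₁ s hsT) (Set.mem_image_of_mem _ ⟨hrmem.1, hrs⟩))
      linarith
    have hm₁s : 0 ≤ mf g₁ s := by
      have := le_csSup (hbdd g₁ hc₁ s hsT) (Set.mem_image_of_mem (fun u => max (-g₁ u) 0)
        (Set.mem_Icc.2 ⟨le_rfl, hs⟩))
      exact le_trans (le_max_right _ 0) this
    have hmt_pos : 0 < mf g₁ t := lt_of_le_of_lt hm₁s hlt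
    have heq' : mf g₁ t = -g₁ r := by
      rcases max_cases (-g₁ r) 0 with ⟨h1, _⟩ | ⟨h1, _⟩
      · rw [heq, h1]
      · exfalso; rw [heq, h1] at hmt_pos; exact lt_irrefl 0 hmt_pos
    have hr0 : 0 < r := lt_of_le_of_lt hs hrs
    have hrT : r ≤ T := hrmem.2.trans htT
    have hd : 0 < y₁ r - y₂ r := by
      have := hincr 0 r le_rfl hr0 hrT
      linarith
    -- key lower bound on mf g₂ t
    have key1 : -g₁ r + (y₁ r - y₂ r) ≤ mf g₂ t := by
      have h1 : -g₂ r ≤ max (-g₂ r) 0 := le_max_left _ _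
      have h2 : max (-g₂ r) 0 ≤ mf g₂ t :=
        le_csSup (hbdd g₂ hc₂ t htT) (Set.mem_image_of_mem _ hrmem)
      have h3 : -g₂ r = -g₁ r + (y₁ r - y₂ r) := by
        simp only [hg₁def, hg₂def]; ring
      linarith
    -- key upper bound on mf g₂ s
    have key2 : mf g₂ s ≤ mf g₁ s + (y₁ r - y₂ r) := by
      refine csSup_le (hne s hs) ?_
      rintro x ⟨u, hu, rfl⟩
      have hur : u < r := lt_of_le_of_lt hu.2 hrs
      have hincru : y₂ r - y₂ u < y₁ r - y₁ u := hincr u r hu.1 hur hrT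
      have hg₁u : -g₁ u ≤ mf g₁ s :=
        le_trans (le_max_left _ 0)
          (le_csSup (hbdd g₁ hc₁ s hsT) (Set.mem_image_of_mem _ hu))
      have h3 : -g₂ u = -g₁ u + (y₁ u - y₂ u) := by
        simp only [hg₁def, hg₂def]; ring
      refine max_le ?_ (by linarith)
      linarith
    linarith
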